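/- Take r = 37/58 (so x = √1995/116, y = 37/116) and let Λ be the subgroup of ℤ² generated by (7, −3) and (4, 3), which has index 33 in ℤ². Then the separation of the induced 33-colouring of the tiles T(i, j) equals 227/58, and this value is attained. -/

import Mathlib

noncomputable section

/-- The Euclidean plane ℝ². -/
abbrev Plane := EuclideanSpace ℝ (Fin 2)

/-- The point (a, b) of the Euclidean plane. -/
def pt (a b : ℝ) : Plane := !₂[a, b]

/-- The semi-regular hexagon K(r): with y = r/2 and x = √(1 − r²)/2, the closed convex
hull of the six points (0, 1/2), (x, y), (x, −y), (0, −1/2), (−x, −y), (−x, y). -/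
def hexK (r : ℝ) : Set Plane :=
  convexHull ℝ
    {pt 0 (1 / 2), pt (Real.sqrt (1 - r ^ 2) / 2) (r / 2),
      pt (Real.sqrt (1 - r ^ 2) / 2) (-(r / 2)), pt 0 (-(1 / 2)),
      pt (-(Real.sqrt (1 - r ^ 2) / 2)) (-(r / 2)),
      pt (-(Real.sqrt (1 - r ^ 2) / 2)) (r / 2)}

/-- The center c(i, j) = ((2i + j)·x, j·(y + 1/2)) of the tile with index (i, j). -/
def center (r : ℝ) (i j : ℤ) : Plane :=
  pt ((2 * (i : ℝ) + (j : ℝ)) * (Real.sqrt (1 - r ^ 2) / 2)) ((j : ℝ) * (r / 2 + 1 / 2))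

/-- The tile T(i, j) = c(i, j) + K(r). -/
def tile (r : ℝ) (i j : ℤ) : Set Plane :=
  (fun p => center r i j + p) '' hexK r

/-- The set of distances realized by points in two distinct same-coloured tiles,
for the colouring of the tiles T(i, j) by the cosets of a subgroup Λ ≤ ℤ²:
tiles T(i, j) and T(i', j') get the same colour iff (i − i', j − j') ∈ Λ.
The separation of the colouring is the infimum of this set. -/
def sameColourDists (r : ℝ) (Λ : AddSubgroup (ℤ × ℤ)) : Set ℝ :=
  {d : ℝ | ∃ (i j i' j' : ℤ) (p q : Plane),
    (i, j) ≠ (i', j') ∧ (i - i', j - j') ∈ Λ ∧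
    p ∈ tile r i j ∧ q ∈ tile r i' j' ∧ d = dist p q}

end

noncomputable section StatementAux


def phi : ℤ × ℤ →+ ZMod 33 where
  toFun p := (p.2 : ZMod 33) - 9 * (p.1 : ZMod 33)
  map_zero' := by simp
  map_add' a b := by simp only [Prod.fst_add, Prod.snd_add]; push_cast; ring

lemma closure_eq_ker :
    AddSubgroup.closure {(((7) : ℤ), ((-3) : ℤ)), (((4) : ℤ), ((3) : ℤ))} = phi.ker := by
  apply le_antisymm
  · rw [AddSubgroup.closure_le]
    rintro p (rfl | rfl) <;>
    · show phi _ = 0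
      simp only [phi, AddMonoidHom.coe_mk, ZeroHom.coe_mk]
      push_cast
      decide
  · intro p hp
    have hp0 : ((p.2 - 9 * p.1 : ℤ) : ZMod 33) = 0 := by
      have : phi p = 0 := hp
      simp only [phi, AddMonoidHom.coe_mk, ZeroHom.coe_mk] at this
      push_cast
      linear_combination this
    obtain ⟨k, hk⟩ := (ZMod.intCast_zmod_eq_zero_iff_dvd _ 33).mp hp0
    have h19 : ((1 : ℤ), (9 : ℤ)) ∈
        AddSubgroup.closure {(((7) : ℤ), ((-3) : ℤ)), (((4) : ℤ), ((3) : ℤ))} := by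
      rw [AddSubgroup.mem_closure_pair]
      exact ⟨-1, 2, by decide⟩
    have h033 : ((0 : ℤ), (33 : ℤ)) ∈
        AddSubgroup.closure {(((7) : ℤ), ((-3) : ℤ)), (((4) : ℤ), ((3) : ℤ))} := by
      rw [AddSubgroup.mem_closure_pair]
      exact ⟨-4, 7, by decide⟩
    have hpeq : p = p.1 • ((1 : ℤ), (9 : ℤ)) + k • ((0 : ℤ), (33 : ℤ)) := by
      have : p.2 = 9 * p.1 + 33 * k := by omega
      ext <;> simp [Prod.smul_fst, Prod.smul_snd, smul_eq_mul] <;> omega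
    rw [hpeq]
    exact AddSubgroup.add_mem _ (AddSubgroup.zsmul_mem _ h19 _) (AddSubgroup.zsmul_mem _ h033 _)

lemma index33 :
    (AddSubgroup.closure {(((7) : ℤ), ((-3) : ℤ)), (((4) : ℤ), ((3) : ℤ))}).index = 33 := by
  rw [closure_eq_ker, AddSubgroup.index_ker]
  have hsurj : Function.Surjective phi := by
    intro z
    obtain ⟨b, rfl⟩ := ZMod.intCast_surjective z
    exact ⟨(0, b), by simp [phi]⟩
  rw [AddMonoidHom.range_eq_top_of_surjective _ hsurj, AddSubgroup.card_top, Nat.card_zmod]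


@[simp] lemma pt_apply0 (a b : ℝ) : pt a b 0 = a := rfl
@[simp] lemma pt_apply1 (a b : ℝ) : pt a b 1 = b := rfl

lemma plane_ext {p q : Plane} (h0 : p 0 = q 0) (h1 : p 1 = q 1) : p = q := by
  apply PiLp.ext; intro i
  fin_cases i <;> assumption

lemma norm_pt (a b : ℝ) : ‖pt a b‖ = Real.sqrt (a ^ 2 + b ^ 2) := by
  rw [EuclideanSpace.norm_eq, Fin.sum_univ_two]
  simp [sq_abs]

lemma lin_le_norm (A B : ℝ) (z : Plane) :
    A * z 0 + B * z 1 ≤ Real.sqrt (A ^ 2 + B ^ 2) * ‖z‖ := by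
  have h := real_inner_le_norm (pt A B) z
  rw [norm_pt] at h
  refine le_trans (le_of_eq ?_) h
  rw [PiLp.inner_apply, Fin.sum_univ_two]
  simp [RCLike.inner_apply, mul_comm]

lemma sqrt1995_sq : Real.sqrt 1995 * Real.sqrt 1995 = 1995 :=
  Real.mul_self_sqrt (by norm_num)

lemma x_val : Real.sqrt (1 - ((37 : ℝ) / 58) ^ 2) / 2 = Real.sqrt 1995 / 116 := by
  have h : (1 : ℝ) - (37 / 58) ^ 2 = (Real.sqrt 1995 / 58) ^ 2 := by
    have h2 : (Real.sqrt 1995 / 58 : ℝ) ^ 2 = 1995 / 3364 := by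
      rw [div_pow, Real.sq_sqrt (by norm_num : (0:ℝ) ≤ 1995)]
      norm_num
    rw [h2]; norm_num
  rw [h, Real.sqrt_sq (by positivity)]
  ring

lemma hexK_eq : hexK (37 / 58) =
    convexHull ℝ
      {pt 0 (1 / 2), pt (Real.sqrt 1995 / 116) (37 / 116),
        pt (Real.sqrt 1995 / 116) (-(37 / 116)), pt 0 (-(1 / 2)),
        pt (-(Real.sqrt 1995 / 116)) (-(37 / 116)),
        pt (-(Real.sqrt 1995 / 116)) (37 / 116)} := by
  rw [hexK, x_val, show (37 : ℝ) / 58 / 2 = 37 / 116 by norm_num]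

lemma hexK_linear_le {A B c : ℝ}
    (h1 : B * (1 / 2) ≤ c) (h2 : B * (-(1 / 2)) ≤ c)
    (h3 : A * (Real.sqrt 1995 / 116) + B * (37 / 116) ≤ c)
    (h4 : A * (Real.sqrt 1995 / 116) + B * (-(37 / 116)) ≤ c)
    (h5 : A * (-(Real.sqrt 1995 / 116)) + B * (-(37 / 116)) ≤ c)
    (h6 : A * (-(Real.sqrt 1995 / 116)) + B * (37 / 116) ≤ c)
    {u : Plane} (hu : u ∈ hexK (37 / 58)) : A * u 0 + B * u 1 ≤ c := by
  rw [hexK_eq] at hu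
  have hconv : Convex ℝ {z : Plane | A * z 0 + B * z 1 ≤ c} := by
    apply convex_halfSpace_le
    exact ⟨fun x y => by change A * (x 0 + y 0) + B * (x 1 + y 1) = _; ring,
           fun t x => by
             change A * (t * x 0) + B * (t * x 1) = t • (A * x 0 + B * x 1)
             rw [smul_eq_mul]; ring⟩
  refine convexHull_min ?_ hconv hu
  rintro z (rfl | rfl | rfl | rfl | rfl | rfl) <;>
    simp only [Set.mem_setOf_eq, pt_apply0, pt_apply1] <;> linarith

lemma hexK_norm_le {u : Plane} (hu : u ∈ hexK (37 / 58)) : ‖u‖ ≤ 1 / 2 := by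
  rw [hexK_eq] at hu
  have half : Real.sqrt ((1:ℝ)/4) = 1/2 := by
    rw [show (1/4 : ℝ) = (1/2) ^ 2 by norm_num, Real.sqrt_sq (by norm_num)]
  have hx2 : (Real.sqrt 1995 / 116) ^ 2 = 1995 / 13456 := by
    rw [div_pow, Real.sq_sqrt (by norm_num : (0:ℝ) ≤ 1995)]
    norm_num
  have hmem : u ∈ Metric.closedBall (0 : Plane) (1/2) := by
    refine convexHull_min ?_ (convex_closedBall _ _) hu
    rintro z (rfl | rfl | rfl | rfl | rfl | rfl) <;>
      rw [Metric.mem_closedBall, dist_zero_right, norm_pt] <;>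
      rw [← half] <;>
      apply Real.sqrt_le_sqrt <;> nlinarith [hx2]
  simpa [dist_zero_right] using Metric.mem_closedBall.mp hmem


lemma vertex_bound (σ τ : ℝ) (hσ : σ = 1 ∨ σ = -1) (hτ : τ = 1 ∨ τ = -1)
    {u : Plane} (hu : u ∈ hexK (37 / 58)) :
    σ * (9 * Real.sqrt 1995) * u 0 + τ * 211 * u 1 ≤ 25762 / 116 := by
  have hs : Real.sqrt 1995 * Real.sqrt 1995 = 1995 := sqrt1995_sq
  apply hexK_linear_le (u := u) (hu := hu) <;>
    rcases hσ with rfl | rfl <;> rcases hτ with rfl | rfl <;> nlinarith [hs]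

lemma key1 (s : ℝ) (hs : s = 1 ∨ s = -1) {u v : Plane}
    (hu : u ∈ hexK (37 / 58)) (hv : v ∈ hexK (37 / 58)) :
    (227 : ℝ) / 58 ≤ ‖pt (11 * Real.sqrt 1995 / 116) (s * 285 / 116) + u - v‖ := by
  set z : Plane := pt (11 * Real.sqrt 1995 / 116) (s * 285 / 116) + u - v with hz
  have h := lin_le_norm (9 * Real.sqrt 1995) (s * 211) z
  have hnorm : Real.sqrt ((9 * Real.sqrt 1995) ^ 2 + (s * 211) ^ 2) = 454 := by
    have : (9 * Real.sqrt 1995) ^ 2 + (s * 211) ^ 2 = 454 ^ 2 := by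
      rcases hs with rfl | rfl <;> nlinarith [sqrt1995_sq]
    rw [this, Real.sqrt_sq (by norm_num)]
  rw [hnorm] at h
  have hz0 : z 0 = 11 * Real.sqrt 1995 / 116 + u 0 - v 0 := rfl
  have hz1 : z 1 = s * 285 / 116 + u 1 - v 1 := rfl
  have hbv : (1:ℝ) * (9 * Real.sqrt 1995) * v 0 + s * 211 * v 1 ≤ 25762 / 116 :=
    vertex_bound 1 s (Or.inl rfl) hs hv
  have hbu : (-1:ℝ) * (9 * Real.sqrt 1995) * u 0 + (-s) * 211 * u 1 ≤ 25762 / 116 := by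
    refine vertex_bound (-1) (-s) (Or.inr rfl) ?_ hu
    rcases hs with rfl | rfl <;> simp
  have hlow : (206116 : ℝ) / 116 ≤ 9 * Real.sqrt 1995 * z 0 + s * 211 * z 1 := by
    rw [hz0, hz1]
    have hs2 : s ^ 2 = 1 := by rcases hs with rfl | rfl <;> norm_num
    nlinarith [sqrt1995_sq]
  have hzn : (0:ℝ) < 454 := by norm_num
  nlinarith [h, hlow]

lemma keyE (s t : ℤ) (h4 : 4 ≤ s ^ 2 ∨ 4 ≤ t ^ 2) {u v : Plane}
    (hu : u ∈ hexK (37 / 58)) (hv : v ∈ hexK (37 / 58)) :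
    (227 : ℝ) / 58 ≤
      ‖pt (11 * (s : ℝ) * (Real.sqrt 1995 / 116)) ((t : ℝ) * 3 * (95 / 116)) + u - v‖ := by
  set Δ : Plane := pt (11 * (s : ℝ) * (Real.sqrt 1995 / 116)) ((t : ℝ) * 3 * (95 / 116)) with hΔ
  have hnd : (570 : ℝ) / 116 ≤ ‖Δ‖ := by
    rw [hΔ, norm_pt]
    rw [show (570 : ℝ) / 116 = Real.sqrt ((570 / 116) ^ 2) by
      rw [Real.sqrt_sq (by norm_num)]]
    apply Real.sqrt_le_sqrt
    have h4' : 4 ≤ ((s : ℝ)) ^ 2 ∨ 4 ≤ ((t : ℝ)) ^ 2 := by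
      rcases h4 with h | h
      · left; exact_mod_cast h
      · right; exact_mod_cast h
    have hs0 : (0:ℝ) ≤ (s:ℝ)^2 := sq_nonneg _
    have ht0 : (0:ℝ) ≤ (t:ℝ)^2 := sq_nonneg _
    rcases h4' with h | h <;> nlinarith [sqrt1995_sq]
  have hsub : ‖u - v‖ ≤ 1 := by
    calc ‖u - v‖ ≤ ‖u‖ + ‖v‖ := norm_sub_le _ _
    _ ≤ 1 := by have := hexK_norm_le hu; have := hexK_norm_le hv; linarith
  have htri : ‖Δ‖ ≤ ‖Δ + u - v‖ + ‖u - v‖ := by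
    have e : Δ = (Δ + u - v) - (u - v) := by abel
    calc ‖Δ‖ = ‖(Δ + u - v) - (u - v)‖ := by rw [← e]
    _ ≤ ‖Δ + u - v‖ + ‖u - v‖ := norm_sub_le _ _
  have : (227:ℝ)/58 = 570/116 - 1 := by norm_num
  linarith

lemma center_37 (a b : ℤ) :
    center (37 / 58) a b =
      pt ((2 * (a : ℝ) + (b : ℝ)) * (Real.sqrt 1995 / 116)) ((b : ℝ) * (95 / 116)) := by
  rw [center, x_val, show (37 : ℝ) / 58 / 2 + 1 / 2 = 95 / 116 by norm_num]

lemma lower_bound (d : ℝ)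
    (hd : d ∈ sameColourDists (37 / 58)
      (AddSubgroup.closure {(((7) : ℤ), ((-3) : ℤ)), (((4) : ℤ), ((3) : ℤ))})) :
    (227 : ℝ) / 58 ≤ d := by
  obtain ⟨i, j, i', j', p, q, hne, hmem, hp, hq, rfl⟩ := hd
  obtain ⟨m, n, hmn⟩ := AddSubgroup.mem_closure_pair.mp hmem
  have h1 := congrArg Prod.fst hmn
  have h2 := congrArg Prod.snd hmn
  simp only [Prod.fst_add, Prod.smul_fst, smul_eq_mul] at h1
  simp only [Prod.snd_add, Prod.smul_snd, smul_eq_mul] at h2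
  have ha : i - i' = 7 * m + 4 * n := by omega
  have hb : j - j' = -3 * m + 3 * n := by omega
  have hmn0 : ¬ (m = 0 ∧ n = 0) := by
    rintro ⟨rfl, rfl⟩
    apply hne
    have : i = i' := by omega
    have : j = j' := by omega
    simp_all
  obtain ⟨u, hu, rfl⟩ := hp
  obtain ⟨v, hv, rfl⟩ := hq
  rw [dist_eq_norm]
  have hpq : center (37/58) i j + u - (center (37/58) i' j' + v) =
      center (37/58) (i - i') (j - j') + u - v := by
    have hc : center (37/58) i j - center (37/58) i' j' = center (37/58) (i-i') (j-j') := by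
      apply plane_ext <;> simp only [center, pt_apply0, pt_apply1, PiLp.sub_apply] <;>
        push_cast <;> ring
    rw [← hc]; abel
  rw [hpq]
  obtain ⟨s, t, hs, ht⟩ : ∃ s t : ℤ, s = m + n ∧ t = n - m := ⟨_, _, rfl, rfl⟩
  have hΔ : center (37/58) (i - i') (j - j') =
      pt (11 * (s : ℝ) * (Real.sqrt 1995 / 116)) ((t : ℝ) * 3 * (95 / 116)) := by
    rw [center_37, ha, hb]
    apply plane_ext <;> simp only [pt_apply0, pt_apply1] <;> push_cast [hs, ht] <;> ring
  rw [hΔ]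
  by_cases h4 : 4 ≤ s ^ 2 ∨ 4 ≤ t ^ 2
  · exact keyE s t h4 hu hv
  · push_neg at h4
    obtain ⟨hs4, ht4⟩ := h4
    have hsb : -1 ≤ s ∧ s ≤ 1 := by constructor <;> nlinarith
    have htb : -1 ≤ t ∧ t ≤ 1 := by constructor <;> nlinarith
    have hcase : (s = 1 ∧ t = 1) ∨ (s = 1 ∧ t = -1) ∨ (s = -1 ∧ t = 1) ∨
        (s = -1 ∧ t = -1) := by omega
    have hx1 : ∀ (σ : ℝ), pt (11 * σ * (Real.sqrt 1995 / 116)) ((σ : ℝ) * 285 / 116)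
        = σ • pt (11 * Real.sqrt 1995 / 116) (285 / 116) := by
      intro σ
      apply plane_ext <;>
        simp only [pt_apply0, pt_apply1, PiLp.smul_apply, smul_eq_mul] <;> ring
    rcases hcase with ⟨rfl, rfl⟩ | ⟨rfl, rfl⟩ | ⟨rfl, rfl⟩ | ⟨rfl, rfl⟩
    · have e : pt (11 * ((1:ℤ) : ℝ) * (Real.sqrt 1995 / 116)) (((1:ℤ) : ℝ) * 3 * (95 / 116))
          = pt (11 * Real.sqrt 1995 / 116) (1 * 285 / 116) := by
        apply plane_ext <;> simp only [pt_apply0, pt_apply1] <;> push_cast <;> ring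
      rw [e]; exact key1 1 (Or.inl rfl) hu hv
    · have e : pt (11 * ((1:ℤ) : ℝ) * (Real.sqrt 1995 / 116)) (((-1:ℤ) : ℝ) * 3 * (95 / 116))
          = pt (11 * Real.sqrt 1995 / 116) ((-1) * 285 / 116) := by
        apply plane_ext <;> simp only [pt_apply0, pt_apply1] <;> push_cast <;> ring
      rw [e]; exact key1 (-1) (Or.inr rfl) hu hv
    · have e : pt (11 * ((-1:ℤ) : ℝ) * (Real.sqrt 1995 / 116)) (((1:ℤ) : ℝ) * 3 * (95 / 116))
          = -pt (11 * Real.sqrt 1995 / 116) ((-1) * 285 / 116) := by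
        apply plane_ext <;>
          simp only [pt_apply0, pt_apply1, PiLp.neg_apply] <;> push_cast <;> ring
      rw [e, show -pt (11 * Real.sqrt 1995 / 116) ((-1) * 285 / 116) + u - v
          = -(pt (11 * Real.sqrt 1995 / 116) ((-1) * 285 / 116) + v - u) by abel, norm_neg]
      exact key1 (-1) (Or.inr rfl) hv hu
    · have e : pt (11 * ((-1:ℤ) : ℝ) * (Real.sqrt 1995 / 116)) (((-1:ℤ) : ℝ) * 3 * (95 / 116))
          = -pt (11 * Real.sqrt 1995 / 116) (1 * 285 / 116) := by
        apply plane_ext <;>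
          simp only [pt_apply0, pt_apply1, PiLp.neg_apply] <;> push_cast <;> ring
      rw [e, show -pt (11 * Real.sqrt 1995 / 116) (1 * 285 / 116) + u - v
          = -(pt (11 * Real.sqrt 1995 / 116) (1 * 285 / 116) + v - u) by abel, norm_neg]
      exact key1 1 (Or.inl rfl) hv hu

lemma attain : (227 : ℝ) / 58 ∈ sameColourDists (37 / 58)
    (AddSubgroup.closure {(((7) : ℤ), ((-3) : ℤ)), (((4) : ℤ), ((3) : ℤ))}) := by
  refine ⟨0, 0, 3, -6, center (37/58) 0 0 + pt 0 (-(1/2)),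
    center (37/58) 3 (-6) + pt 0 (1/2), by decide, ?_, ?_, ?_, ?_⟩
  · show ((0:ℤ) - 3, (0:ℤ) - (-6)) ∈ _
    rw [show ((0:ℤ) - 3, (0:ℤ) - (-6)) = ((-3 : ℤ), (6 : ℤ)) by norm_num]
    exact AddSubgroup.mem_closure_pair.mpr ⟨-1, 1, by decide⟩
  · exact ⟨pt 0 (-(1/2)), subset_convexHull ℝ _ (by simp), rfl⟩
  · exact ⟨pt 0 (1/2), subset_convexHull ℝ _ (by simp), rfl⟩
  · rw [dist_eq_norm]
    have e : center (37/58) 0 0 + pt 0 (-(1/2)) - (center (37/58) 3 (-6) + pt 0 (1/2))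
        = pt 0 (454/116) := by
      apply plane_ext <;>
        simp only [center, pt_apply0, pt_apply1, PiLp.sub_apply, PiLp.add_apply] <;>
        push_cast <;> norm_num
    rw [e, norm_pt, show (0:ℝ)^2 + (454/116)^2 = (227/58)^2 by norm_num,
      Real.sqrt_sq (by norm_num)]

end StatementAux

/-- with r = 37/58 and Λ = ⟨(7, -3), (4, 3)⟩ ≤ ℤ² of index 33,
the separation of the induced 33-colouring of the tiles T(i, j) equals the stated
value, and this value is attained. -/
theorem statement14 :
    (AddSubgroup.closure {(((7) : ℤ), ((-3) : ℤ)), (((4) : ℤ), ((3) : ℤ))}).index = 33 ∧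
    IsLeast
      (sameColourDists (37 / 58)
        (AddSubgroup.closure {(((7) : ℤ), ((-3) : ℤ)), (((4) : ℤ), ((3) : ℤ))}))
      ((227 : ℝ) / 58) := by
  refine ⟨index33, attain, ?_⟩
  intro d hd
  exact lower_bound d hd
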